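/- Define f : ℝ² → ℝ by f(y,t) = 0 if t ≤ 0, f(y,t) = 2t/y if 0 < t ≤ y²/2, and f(y,t) = y if t > y²/2. Then the function ∇^f f := ∂_y f + f·∂_t f (computed pointwise where f is differentiable) equals 0 for t ≤ 0, equals 2t/y² for 0 < t ≤ y²/2, and equals 1 for t > y²/2; in particular ∇^f f is continuous on ℝ² \ {(0,0)} and bounded by 1. -/

import Mathlib

/-- The function of the first example. -/
noncomputable def F9 (p : ℝ × ℝ) : ℝ :=
  if p.2 ≤ 0 then 0 else if p.2 ≤ p.1 ^ 2 / 2 then 2 * p.2 / p.1 else p.1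

/-- The claimed intrinsic gradient ∇^f f. -/
noncomputable def G9 (p : ℝ × ℝ) : ℝ :=
  if p.2 ≤ 0 then 0 else if p.2 ≤ p.1 ^ 2 / 2 then 2 * p.2 / p.1 ^ 2 else 1

/-- partial derivative in the first coordinate -/
lemma F9.hd1 {q : ℝ × ℝ} (h : DifferentiableAt ℝ F9 q) :
    HasDerivAt (fun s : ℝ => F9 (q.1 + s, q.2)) (fderiv ℝ F9 q (1, 0)) 0 := by
  have hγ : HasDerivAt (fun s : ℝ => ((q.1 + s, q.2) : ℝ × ℝ)) ((1 : ℝ), (0 : ℝ)) 0 :=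
    ((hasDerivAt_id 0).const_add q.1).prodMk (hasDerivAt_const 0 q.2)
  have hf : HasFDerivAt F9 (fderiv ℝ F9 q) ((fun s : ℝ => ((q.1 + s, q.2) : ℝ × ℝ)) 0) := by
    simpa using h.hasFDerivAt
  exact hf.comp_hasDerivAt 0 hγ

/-- partial derivative in the second coordinate -/
lemma F9.hd2 {q : ℝ × ℝ} (h : DifferentiableAt ℝ F9 q) :
    HasDerivAt (fun s : ℝ => F9 (q.1, q.2 + s)) (fderiv ℝ F9 q (0, 1)) 0 := by
  have hγ : HasDerivAt (fun s : ℝ => ((q.1, q.2 + s) : ℝ × ℝ)) ((0 : ℝ), (1 : ℝ)) 0 :=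
    (hasDerivAt_const 0 q.1).prodMk ((hasDerivAt_id 0).const_add q.2)
  have hf : HasFDerivAt F9 (fderiv ℝ F9 q) ((fun s : ℝ => ((q.1, q.2 + s) : ℝ × ℝ)) 0) := by
    simpa using h.hasFDerivAt
  exact hf.comp_hasDerivAt 0 hγ

/-- derivative along the parabola -/
lemma F9.hd3 {q : ℝ × ℝ} (h : DifferentiableAt ℝ F9 q) (hq : q.2 = q.1 ^ 2 / 2) :
    HasDerivAt (fun s : ℝ => F9 (s, s ^ 2 / 2)) (fderiv ℝ F9 q (1, q.1)) q.1 := by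
  have hγ : HasDerivAt (fun s : ℝ => ((s, s ^ 2 / 2) : ℝ × ℝ)) ((1 : ℝ), q.1) q.1 := by
    refine (hasDerivAt_id q.1).prodMk ?_
    have := ((hasDerivAt_pow 2 q.1)).div_const 2
    simpa using this
  have hf : HasFDerivAt F9 (fderiv ℝ F9 q) ((fun s : ℝ => ((s, s ^ 2 / 2) : ℝ × ℝ)) q.1) := by
    simp only
    rw [← hq]
    exact h.hasFDerivAt
  exact hf.comp_hasDerivAt q.1 hγ

lemma F9.parabola (s : ℝ) : F9 (s, s ^ 2 / 2) = s := by
  rcases eq_or_ne s 0 with rfl | hs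
  · simp [F9]
  · have h1 : ¬ (s ^ 2 / 2 ≤ 0) := not_le.mpr (by positivity)
    rw [F9, if_neg h1, if_pos le_rfl]
    field_simp

theorem stmt_9 :
    (∀ q : ℝ × ℝ, DifferentiableAt ℝ F9 q →
      fderiv ℝ F9 q (1, 0) + F9 q * fderiv ℝ F9 q (0, 1) = G9 q) ∧
    ContinuousOn G9 {q : ℝ × ℝ | q ≠ (0, 0)} ∧
    (∀ q : ℝ × ℝ, |G9 q| ≤ 1) := by
  refine ⟨?_, ?_, ?_⟩
  · intro q hdiff
    rcases le_or_gt q.2 0 with ht0 | ht0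
    · -- t ≤ 0 : F9(·, q.2) ≡ 0
      have hF : F9 q = 0 := by simp [F9, ht0]
      have h0 : (fun s : ℝ => F9 (q.1 + s, q.2)) = fun _ => 0 := by
        funext s; simp [F9, ht0]
      have h1 := F9.hd1 hdiff
      rw [h0] at h1
      have := h1.unique (hasDerivAt_const 0 0)
      rw [this, hF, G9]
      simp [ht0]
    · rcases lt_trichotomy q.2 (q.1 ^ 2 / 2) with hlt | heq | hgt
      · -- 0 < t < y²/2, so y ≠ 0
        have hy : q.1 ≠ 0 := by
          intro h; rw [h] at hlt; simp at hlt; linarith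
        have hF : F9 q = 2 * q.2 / q.1 := by
          simp [F9, not_le.mpr ht0, hlt.le]
        -- partial in y
        have hev1 : (fun s : ℝ => F9 (q.1 + s, q.2)) =ᶠ[nhds 0]
            (fun s : ℝ => 2 * q.2 / (q.1 + s)) := by
          have hc : ∀ᶠ s : ℝ in nhds 0, q.2 < (q.1 + s) ^ 2 / 2 := by
            apply ContinuousAt.eventually_lt continuousAt_const _ (by simpa using hlt)
            fun_prop
          filter_upwards [hc] with s hs
          simp [F9, not_le.mpr ht0, hs.le]
        have hg1 : HasDerivAt (fun s : ℝ => 2 * q.2 / (q.1 + s))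
            ((0 * (q.1 + 0) - 2 * q.2 * 1) / (q.1 + 0) ^ 2) 0 := by
          exact (hasDerivAt_const 0 (2 * q.2)).div ((hasDerivAt_id 0).const_add q.1)
            (by simpa using hy)
        have e1 : fderiv ℝ F9 q (1, 0) = (0 * (q.1 + 0) - 2 * q.2 * 1) / (q.1 + 0) ^ 2 :=
          (F9.hd1 hdiff).unique (hg1.congr_of_eventuallyEq hev1)
        -- partial in t
        have hev2 : (fun s : ℝ => F9 (q.1, q.2 + s)) =ᶠ[nhds 0]
            (fun s : ℝ => 2 * (q.2 + s) / q.1) := by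
          have hc : ∀ᶠ s : ℝ in nhds 0, 0 < q.2 + s ∧ q.2 + s < q.1 ^ 2 / 2 := by
            have h1 : ∀ᶠ s : ℝ in nhds 0, 0 < q.2 + s :=
              ContinuousAt.eventually_lt continuousAt_const (by fun_prop) (by simpa using ht0)
            have h2 : ∀ᶠ s : ℝ in nhds 0, q.2 + s < q.1 ^ 2 / 2 :=
              ContinuousAt.eventually_lt (by fun_prop) continuousAt_const (by simpa using hlt)
            exact h1.and h2
          filter_upwards [hc] with s hs
          simp [F9, not_le.mpr hs.1, hs.2.le]
        have hg2 : HasDerivAt (fun s : ℝ => 2 * (q.2 + s) / q.1) (2 * 1 / q.1) 0 :=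
          (((hasDerivAt_id 0).const_add q.2).const_mul 2).div_const q.1
        have e2 : fderiv ℝ F9 q (0, 1) = 2 * 1 / q.1 :=
          (F9.hd2 hdiff).unique (hg2.congr_of_eventuallyEq hev2)
        rw [e1, e2, hF]
        simp only [G9, not_le.mpr ht0, hlt.le, if_true, if_false, add_zero]
        field_simp
        ring
      · -- t = y²/2 > 0 : use parabola
        have hy : q.1 ≠ 0 := by
          intro h; rw [h] at heq; simp at heq; linarith
        have hF : F9 q = q.1 := by
          have := F9.parabola q.1
          rw [← heq] at this
          simpa using this
        have h3 := F9.hd3 hdiff heq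
        have h3' : HasDerivAt (fun s : ℝ => F9 (s, s ^ 2 / 2)) 1 q.1 := by
          have : (fun s : ℝ => F9 (s, s ^ 2 / 2)) = fun s => s := by
            funext s; exact F9.parabola s
          rw [this]; exact hasDerivAt_id q.1
        have e3 : fderiv ℝ F9 q (1, q.1) = 1 := h3.unique h3'
        have hlin : fderiv ℝ F9 q (1, 0) + q.1 * fderiv ℝ F9 q (0, 1)
            = fderiv ℝ F9 q (1, q.1) := by
          have : ((1 : ℝ), q.1) = (1, 0) + q.1 • ((0 : ℝ), (1 : ℝ)) := by
            simp [Prod.ext_iff]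
          rw [this, map_add, map_smul]
          simp [smul_eq_mul]
        have hG : G9 q = 1 := by
          have h0 : ¬ (q.1 ^ 2 / 2 ≤ 0) := not_le.mpr (by positivity)
          simp only [G9, heq, h0, le_refl, if_true, if_false]
          field_simp
        rw [hF, hlin, e3, hG]
      · -- t > y²/2
        have hF : F9 q = q.1 := by
          simp [F9, not_le.mpr ht0, not_le.mpr hgt]
        have hev1 : (fun s : ℝ => F9 (q.1 + s, q.2)) =ᶠ[nhds 0]
            (fun s : ℝ => q.1 + s) := by
          have hc : ∀ᶠ s : ℝ in nhds 0, (q.1 + s) ^ 2 / 2 < q.2 :=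
            ContinuousAt.eventually_lt (by fun_prop) continuousAt_const (by simpa using hgt)
          filter_upwards [hc] with s hs
          simp [F9, not_le.mpr ht0, not_le.mpr hs]
        have hg1 : HasDerivAt (fun s : ℝ => q.1 + s) 1 0 := (hasDerivAt_id 0).const_add q.1
        have e1 : fderiv ℝ F9 q (1, 0) = 1 :=
          (F9.hd1 hdiff).unique (hg1.congr_of_eventuallyEq hev1)
        have hev2 : (fun s : ℝ => F9 (q.1, q.2 + s)) =ᶠ[nhds 0]
            (fun _ : ℝ => q.1) := by
          have hc : ∀ᶠ s : ℝ in nhds 0, q.1 ^ 2 / 2 < q.2 + s :=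
            ContinuousAt.eventually_lt continuousAt_const (by fun_prop) (by simpa using hgt)
          have hc2 : ∀ᶠ s : ℝ in nhds 0, 0 < q.2 + s :=
            ContinuousAt.eventually_lt continuousAt_const (by fun_prop) (by simpa using ht0)
          filter_upwards [hc, hc2] with s hs hs2
          simp [F9, not_le.mpr hs2, not_le.mpr hs]
        have e2 : fderiv ℝ F9 q (0, 1) = 0 :=
          (F9.hd2 hdiff).unique ((hasDerivAt_const 0 q.1).congr_of_eventuallyEq hev2)
        rw [e1, e2, hF]
        simp [G9, not_le.mpr ht0, not_le.mpr hgt]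
  · -- continuity
    have hopen : IsOpen {q : ℝ × ℝ | q ≠ (0, 0)} := isOpen_ne
    refine continuousOn_of_forall_continuousAt (fun q hq => ?_)
    by_cases hy : q.1 ≠ 0
    · -- near q, G9 = min 1 (max 0 (2t/y²))
      have houter : Continuous (fun x : ℝ => min 1 (max 0 x)) :=
        continuous_const.min (continuous_const.max continuous_id)
      have hinner : ContinuousAt (fun p : ℝ × ℝ => 2 * p.2 / p.1 ^ 2) q :=
        (continuousAt_const.mul continuousAt_snd).div
          (continuousAt_fst.pow 2) (by positivity)
      have hca : ContinuousAt (fun p : ℝ × ℝ => min 1 (max 0 (2 * p.2 / p.1 ^ 2))) q :=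
        houter.continuousAt.comp hinner
      refine hca.congr ?_
      have hne : ∀ᶠ p : ℝ × ℝ in nhds q, p.1 ≠ 0 := continuousAt_fst.eventually_ne hy
      filter_upwards [hne] with p hp
      have hp2 : (0 : ℝ) < p.1 ^ 2 := by positivity
      rcases le_or_gt p.2 0 with h1 | h1
      · have : 2 * p.2 / p.1 ^ 2 ≤ 0 := div_nonpos_iff.mpr (Or.inr ⟨by linarith, hp2.le⟩)
        simp [G9, h1, max_eq_left this, min_eq_right (by linarith : (0:ℝ) ≤ 1)]
      · rcases le_or_gt p.2 (p.1 ^ 2 / 2) with h2 | h2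
        · have hge : (0 : ℝ) ≤ 2 * p.2 / p.1 ^ 2 := by positivity
          have hle : 2 * p.2 / p.1 ^ 2 ≤ 1 := by
            rw [div_le_one hp2]; linarith
          simp [G9, not_le.mpr h1, h2, max_eq_right hge, min_eq_right hle]
        · have hge : (1 : ℝ) ≤ 2 * p.2 / p.1 ^ 2 := by
            rw [le_div_iff₀ hp2]; linarith
          simp [G9, not_le.mpr h1, not_le.mpr h2,
            max_eq_right (by linarith : (0:ℝ) ≤ 2 * p.2 / p.1 ^ 2), min_eq_left hge]
    · push_neg at hy
      have ht : q.2 ≠ 0 := by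
        intro h; apply hq; simp only [Set.mem_setOf_eq] at hq ⊢
        exact Prod.ext hy h
      rcases lt_or_gt_of_ne ht with h1 | h1
      · -- locally G9 = 0
        have hc0 : ContinuousAt (fun _ : ℝ × ℝ => (0 : ℝ)) q := continuousAt_const
        refine hc0.congr ?_
        have hc : ∀ᶠ p : ℝ × ℝ in nhds q, p.2 < 0 :=
          ContinuousAt.eventually_lt continuousAt_snd continuousAt_const h1
        filter_upwards [hc] with p hp
        simp [G9, hp.le]
      · -- q.2 > 0 = q.1²/2, locally G9 = 1
        have hc1 : ContinuousAt (fun _ : ℝ × ℝ => (1 : ℝ)) q := continuousAt_const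
        refine hc1.congr ?_
        have hgt : q.1 ^ 2 / 2 < q.2 := by rw [hy]; simpa using h1
        have hc : ∀ᶠ p : ℝ × ℝ in nhds q, p.1 ^ 2 / 2 < p.2 :=
          ContinuousAt.eventually_lt (by fun_prop) continuousAt_snd hgt
        have hc2 : ∀ᶠ p : ℝ × ℝ in nhds q, 0 < p.2 :=
          ContinuousAt.eventually_lt continuousAt_const continuousAt_snd h1
        filter_upwards [hc, hc2] with p hp hp2
        simp [G9, not_le.mpr hp2, not_le.mpr hp]
  · -- bound
    intro q
    rcases le_or_gt q.2 0 with h1 | h1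
    · simp [G9, h1]
    · rcases le_or_gt q.2 (q.1 ^ 2 / 2) with h2 | h2
      · have hy : (0 : ℝ) < q.1 ^ 2 := by nlinarith
        have hge : (0 : ℝ) ≤ 2 * q.2 / q.1 ^ 2 := by positivity
        have hle : 2 * q.2 / q.1 ^ 2 ≤ 1 := by rw [div_le_one hy]; linarith
        simp only [G9, not_le.mpr h1, if_false, h2, if_true]
        rw [abs_of_nonneg hge]; exact hle
      · simp [G9, not_le.mpr h1, not_le.mpr h2]
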